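/- Let n ≥ 2 and t ≥ 1 be integers, K a field, S = K[x_1,…,x_n], and I = I(P_n) the edge ideal of the path P_n. Then sdepth(S/I^t) ≥ max{⌈(n−t+1)/3⌉, 1}. -/

import Mathlib

open MvPolynomial

/-- The edge ideal `I(P_m)` of the path `P_m` on vertices `x_1, …, x_m`
(0-indexed as `X 0, …, X (m-1)`), regarded as an ideal of `S = K[x_1, …, x_n]`:
it is generated by the monomials `X i * X (i+1)` for `i + 2 ≤ m`
(1-indexed: `x_i x_{i+1}` for `1 ≤ i ≤ m - 1`). -/
noncomputable def pathIdeal (K : Type*) [Field K] (n m : ℕ) :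
    Ideal (MvPolynomial (Fin n) K) :=
  Ideal.span {p | ∃ i j : Fin n, (j : ℕ) = (i : ℕ) + 1 ∧ (i : ℕ) + 2 ≤ m ∧ p = X i * X j}

/-- A (combinatorial) Stanley decomposition of `S/I` for a monomial ideal `I` of
`S = K[x_1, …, x_n]`: a finite family of Stanley spaces `u K[Z]`, encoded as pairs
`(u, Z)` of an exponent vector `u` and a set of variables `Z`, such that each
Stanley space consists of monomials not in `I` (so `u K[Z]` is a free
`K[Z]`-module inside `S/I`) and every monomial not in `I` lies in exactly one
Stanley space (so `S/I` is the direct sum of the Stanley spaces as `ℤⁿ`-graded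
`K`-vector spaces). -/
def IsStanleyDecomp {K : Type*} [Field K] {n : ℕ} (I : Ideal (MvPolynomial (Fin n) K))
    (D : Finset ((Fin n →₀ ℕ) × Finset (Fin n))) : Prop :=
  (∀ p ∈ D, ∀ v : Fin n →₀ ℕ, v.support ⊆ p.2 → (monomial (p.1 + v) (1 : K)) ∉ I) ∧
  ∀ a : Fin n →₀ ℕ, (monomial a (1 : K)) ∉ I →
    ∃! p : (Fin n →₀ ℕ) × Finset (Fin n), p ∈ D ∧
      ∃ v : Fin n →₀ ℕ, v.support ⊆ p.2 ∧ a = p.1 + v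

/-- The Stanley depth `sdepth (S/I)` of the quotient by a monomial ideal `I`:
the largest `s` such that some Stanley decomposition of `S/I` has all its
Stanley spaces of dimension `|Z| ≥ s`. -/
noncomputable def sdepth {K : Type*} [Field K] {n : ℕ}
    (I : Ideal (MvPolynomial (Fin n) K)) : ℕ :=
  sSup {s : ℕ | ∃ D, IsStanleyDecomp I D ∧ ∀ p ∈ D, s ≤ p.2.card}

set_option linter.unreachableTactic false
set_option linter.unusedTactic false

namespace SdepthAux

open Finsupp

abbrev V := ℕ →₀ ℕ

def epred (e : ℕ → ℕ) : ℕ → ℕ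
  | 0 => 0
  | v + 1 => e v

def Feas (e : ℕ → ℕ) (a : V) : Prop := ∀ v, epred e v + e v ≤ a v

def Bad (m t : ℕ) (a : V) : Prop :=
  ∃ e : ℕ → ℕ, (∀ i, ¬ (i + 2 ≤ m) → e i = 0) ∧ Feas e a ∧ (∑ i ∈ Finset.range m, e i) = t

def F1 (n t : ℕ) (a : V) : Prop := a.support ⊆ Finset.range n ∧ ¬ Bad n t a

def F2 (n t : ℕ) (a : V) : Prop :=
  a.support ⊆ Finset.range n ∧ ¬ Bad n t (a + single (n - 1) 1)

def PartitionsInto (F : V → Prop) (d : ℕ) : Prop :=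
  ∃ D : Finset (V × Finset ℕ),
    (∀ p ∈ D, d ≤ p.2.card) ∧
    (∀ p ∈ D, ∀ v : V, v.support ⊆ p.2 → F (p.1 + v)) ∧
    (∀ a, F a → ∃! p : V × Finset ℕ, p ∈ D ∧ ∃ v : V, v.support ⊆ p.2 ∧ a = p.1 + v)

theorem PartitionsInto.congr {F G : V → Prop} {d : ℕ} (h : ∀ a, F a ↔ G a)
    (hF : PartitionsInto F d) : PartitionsInto G d := by
  have : F = G := funext fun a => propext (h a)
  rwa [this] at hF

theorem PartitionsInto.mono {F : V → Prop} {d d' : ℕ} (hd : d' ≤ d)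
    (hF : PartitionsInto F d) : PartitionsInto F d' := by
  obtain ⟨D, h1, h2, h3⟩ := hF
  exact ⟨D, fun p hp => le_trans hd (h1 p hp), h2, h3⟩

theorem PartitionsInto.of_empty {F : V → Prop} (h : ∀ a, ¬ F a) (d : ℕ) :
    PartitionsInto F d :=
  ⟨∅, by simp, by simp, fun a ha => absurd ha (h a)⟩

theorem erase_eq_self_of_eq_zero {a : V} {j : ℕ} (h : a j = 0) : a.erase j = a := by
  ext v
  rcases eq_or_ne v j with rfl | hv
  · simpa [Finsupp.erase_same] using h.symm
  · simp [Finsupp.erase_ne hv]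

/-- Free variable lemma. -/
theorem PartitionsInto.free {F : V → Prop} {d : ℕ} {j : ℕ} (hj : ∀ a, F a → a j = 0)
    (h : PartitionsInto F d) : PartitionsInto (fun a => F (a.erase j)) (d + 1) := by
  obtain ⟨D, h1, h2, h3⟩ := h
  have hjD : ∀ p ∈ D, j ∉ p.2 := by
    intro p hp hmem
    have := h2 p hp (single j 1) (by
      rw [Finsupp.support_single_ne_zero _ one_ne_zero]
      simpa using hmem)
    have := hj _ this
    simp [Finsupp.single_apply] at this
  refine ⟨D.image (fun p => (p.1, insert j p.2)), ?_, ?_, ?_⟩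
  · intro p hp
    simp only [Finset.mem_image] at hp
    obtain ⟨q, hq, rfl⟩ := hp
    rw [Finset.card_insert_of_notMem (hjD q hq)]
    exact Nat.add_le_add_right (h1 q hq) 1
  · intro p hp v hv
    simp only [Finset.mem_image] at hp
    obtain ⟨q, hq, rfl⟩ := hp
    have hq1 : q.1 j = 0 := hj _ (by simpa using h2 q hq 0 (by simp))
    simp only
    rw [Finsupp.erase_add, erase_eq_self_of_eq_zero hq1]
    refine h2 q hq _ ?_
    rw [Finsupp.support_erase]
    intro x hx
    rcases Finset.mem_erase.1 hx with ⟨hxj, hxv⟩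
    rcases Finset.mem_insert.1 (hv hxv) with rfl | hx2
    · exact absurd rfl hxj
    · exact hx2
  · intro a ha
    obtain ⟨p, ⟨hpD, v, hv, hav⟩, hpu⟩ := h3 _ ha
    refine ⟨(p.1, insert j p.2), ⟨Finset.mem_image_of_mem _ hpD, v + single j (a j), ?_, ?_⟩, ?_⟩
    · refine (Finsupp.support_add).trans ?_
      intro x hx
      rcases Finset.mem_union.1 hx with hx | hx
      · exact Finset.mem_insert_of_mem (hv hx)
      · have := Finsupp.support_single_subset hx
        simp only [Finset.mem_singleton] at this
        exact this ▸ Finset.mem_insert_self _ _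
    · conv_lhs => rw [← Finsupp.erase_add_single j a]
      rw [hav, add_assoc]
    · rintro q ⟨hqD, w, hw, haw⟩
      simp only [Finset.mem_image] at hqD
      obtain ⟨r, hr, rfl⟩ := hqD
      have hr1 : r.1 j = 0 := hj _ (by simpa using h2 r hr 0 (by simp))
      have key : r = p := by
        refine hpu r ⟨hr, w.erase j, ?_, ?_⟩
        · rw [Finsupp.support_erase]
          intro x hx
          rcases Finset.mem_erase.1 hx with ⟨hxj, hxw⟩
          rcases Finset.mem_insert.1 (hw hxw) with rfl | hx2
          · exact absurd rfl hxj
          · exact hx2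
        · have : a.erase j = (r.1 + w).erase j := by rw [haw]
          rwa [Finsupp.erase_add, erase_eq_self_of_eq_zero hr1] at this
      rw [key]

theorem single_add_sub {a : V} {j : ℕ} (h : 1 ≤ a j) :
    single j 1 + (a - single j 1) = a := by
  ext v
  rcases eq_or_ne v j with rfl | hv
  · simp only [Finsupp.add_apply, Finsupp.tsub_apply, Finsupp.single_apply, if_pos rfl, if_true]
    omega
  · simp [Finsupp.add_apply, Finsupp.tsub_apply, Finsupp.single_apply, (Ne.symm hv)]

/-- Splitting lemma. -/
theorem PartitionsInto.split {F : V → Prop} {d : ℕ} {j : ℕ}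
    (h0 : PartitionsInto (fun a => F a ∧ a j = 0) d)
    (h1 : PartitionsInto (fun b => F (b + single j 1)) d) :
    PartitionsInto F d := by
  obtain ⟨D0, h01, h02, h03⟩ := h0
  obtain ⟨D1, h11, h12, h13⟩ := h1
  classical
  refine ⟨D0 ∪ D1.image (fun p => (single j 1 + p.1, p.2)), ?_, ?_, ?_⟩
  · intro p hp
    rcases Finset.mem_union.1 hp with hp | hp
    · exact h01 p hp
    · simp only [Finset.mem_image] at hp
      obtain ⟨q, hq, rfl⟩ := hp
      exact h11 q hq
  · intro p hp v hv
    rcases Finset.mem_union.1 hp with hp | hp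
    · exact (h02 p hp v hv).1
    · simp only [Finset.mem_image] at hp
      obtain ⟨q, hq, rfl⟩ := hp
      have := h12 q hq v hv
      simpa [add_assoc, add_comm, add_left_comm] using this
  · intro a ha
    by_cases haj : a j = 0
    · obtain ⟨p, ⟨hpD, v, hv, hav⟩, hpu⟩ := h03 a ⟨ha, haj⟩
      refine ⟨p, ⟨Finset.mem_union_left _ hpD, v, hv, hav⟩, ?_⟩
      rintro q ⟨hqD, w, hw, haw⟩
      rcases Finset.mem_union.1 hqD with hqD | hqD
      · exact hpu q ⟨hqD, w, hw, haw⟩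
      · exfalso
        simp only [Finset.mem_image] at hqD
        obtain ⟨r, hr, rfl⟩ := hqD
        have : a j = 1 + r.1 j + w j := by
          rw [haw]
          simp [Finsupp.single_apply]
        omega
    · have haj' : 1 ≤ a j := Nat.one_le_iff_ne_zero.2 haj
      have hb : F ((a - single j 1) + single j 1) := by
        rw [add_comm, single_add_sub haj']; exact ha
      obtain ⟨p, ⟨hpD, v, hv, hav⟩, hpu⟩ := h13 _ hb
      refine ⟨(single j 1 + p.1, p.2), ⟨Finset.mem_union_right _ (Finset.mem_image_of_mem _ hpD),
        v, hv, ?_⟩, ?_⟩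
      · have := congrArg (fun x => single j 1 + x) hav
        rw [← add_assoc] at this
        rw [← this, single_add_sub haj']
      · rintro q ⟨hqD, w, hw, haw⟩
        rcases Finset.mem_union.1 hqD with hqD | hqD
        · exfalso
          have := (h02 q hqD w hw).2
          rw [← haw] at this
          omega
        · simp only [Finset.mem_image] at hqD
          obtain ⟨r, hr, rfl⟩ := hqD
          have key : r = p := by
            refine hpu r ⟨hr, w, hw, ?_⟩
            have : single j 1 + (a - single j 1) = single j 1 + (r.1 + w) := by
              rw [single_add_sub haj', haw, add_assoc]
            exact add_left_cancel this
          rw [key]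


theorem epred_succ (e : ℕ → ℕ) (w : ℕ) : epred e (w+1) = e w := rfl

theorem bad_zero (m : ℕ) (a : V) : Bad m 0 a :=
  ⟨fun _ => 0, fun _ _ => rfl, fun v => by cases v <;> simp [epred], by simp⟩

theorem not_bad_of_no_edge {m t : ℕ} (hm : m ≤ 1) (ht : 1 ≤ t) (a : V) : ¬ Bad m t a := by
  rintro ⟨e, hsupp, -, hsum⟩
  have : ∀ i ∈ Finset.range m, e i = 0 := fun i _ => hsupp i (by omega)
  rw [Finset.sum_congr rfl this] at hsum
  simp at hsum
  omega

theorem Feas.mono {e e' : ℕ → ℕ} (h : ∀ i, e' i ≤ e i) {a : V} (hf : Feas e a) : Feas e' a := by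
  intro v
  refine le_trans ?_ (hf v)
  have : epred e' v ≤ epred e v := by
    cases v with
    | zero => simp [epred]
    | succ w => exact h w
  exact Nat.add_le_add this (h v)

theorem feas_congr {m : ℕ} {e : ℕ → ℕ} (hsupp : ∀ i, ¬ (i + 2 ≤ m) → e i = 0)
    {a b : V} (h : ∀ v, v < m → a v = b v) (hf : Feas e a) : Feas e b := by
  intro v
  by_cases hv : v < m
  · rw [← h v hv]; exact hf v
  · have h1 : e v = 0 := hsupp v (by omega)
    have h2 : epred e v = 0 := by
      cases v with
      | zero => rfl
      | succ w => exact hsupp w (by omega)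
    rw [h1, h2]
    exact Nat.zero_le _

theorem bad_congr {m t : ℕ} {a b : V} (h : ∀ v, v < m → a v = b v) :
    Bad m t a ↔ Bad m t b := by
  constructor <;> rintro ⟨e, hsupp, hfeas, hsum⟩
  · exact ⟨e, hsupp, feas_congr hsupp h hfeas, hsum⟩
  · exact ⟨e, hsupp, feas_congr hsupp (fun v hv => (h v hv).symm) hfeas, hsum⟩

theorem sum_range_add_two (e : ℕ → ℕ) (m : ℕ) :
    ∑ i ∈ Finset.range (m+2), e i = (∑ i ∈ Finset.range m, e i) + e m + e (m+1) := by
  rw [Finset.sum_range_succ, Finset.sum_range_succ]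

/-- B1 -/
theorem bad_two_step {m t : ℕ} {a : V} (h : a m = 0) : Bad (m+2) t a ↔ Bad m t a := by
  constructor <;> rintro ⟨e, hsupp, hfeas, hsum⟩
  · have hm := hfeas m
    rw [h] at hm
    have hem : e m = 0 := by omega
    have hem1 : e (m+1) = 0 := hsupp _ (by omega)
    refine ⟨e, ?_, hfeas, ?_⟩
    · intro i hi
      by_cases h2 : i + 2 ≤ m + 2
      · have : i = m ∨ i + 1 = m := by omega
        rcases this with rfl | hi1
        · exact hem
        · have : epred e m = e i := by rw [← hi1]; rfl
          omega
      · exact hsupp i h2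
    · rw [sum_range_add_two, hem, hem1] at hsum
      omega
  · have hem : e m = 0 := hsupp _ (by omega)
    have hem1 : e (m+1) = 0 := hsupp _ (by omega)
    refine ⟨e, fun i hi => hsupp i (by omega), hfeas, ?_⟩
    rw [sum_range_add_two, hem, hem1]
    omega

/-- B3 -/
theorem bad_one_step {m t : ℕ} {a : V} (h : a m = 0) : Bad (m+1) t a ↔ Bad m t a := by
  constructor <;> rintro ⟨e, hsupp, hfeas, hsum⟩
  · have hm := hfeas m
    rw [h] at hm
    have hem : e m = 0 := by omega
    refine ⟨e, ?_, hfeas, ?_⟩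
    · intro i hi
      by_cases h2 : i + 2 ≤ m + 1
      · have : i + 1 = m := by omega
        have : epred e m = e i := by rw [← this]; rfl
        omega
      · exact hsupp i h2
    · rw [Finset.sum_range_succ, hem] at hsum
      omega
  · have hem : e m = 0 := hsupp _ (by omega)
    refine ⟨e, fun i hi => hsupp i (by omega), hfeas, ?_⟩
    rw [Finset.sum_range_succ, hem]
    omega

theorem sum_update_sub_one {s : Finset ℕ} {e : ℕ → ℕ} {i : ℕ} (hi : i ∈ s) (h1 : 1 ≤ e i) :
    ∑ k ∈ s, Function.update e i (e i - 1) k = (∑ k ∈ s, e k) - 1 := by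
  rw [Finset.sum_update_of_mem hi, Finset.sum_eq_sum_sdiff_singleton_add hi]
  omega

theorem update_supp {m : ℕ} {e : ℕ → ℕ} (hsupp : ∀ i, ¬ (i + 2 ≤ m) → e i = 0)
    {i x : ℕ} (hx : x ≤ e i) : ∀ k, ¬ (k + 2 ≤ m) → Function.update e i x k = 0 := by
  intro k hk
  rcases eq_or_ne k i with rfl | hne
  · rw [Function.update_self]
    have := hsupp k hk
    omega
  · rw [Function.update_of_ne hne]
    exact hsupp k hk

theorem epred_update {e : ℕ → ℕ} {i x : ℕ} (v : ℕ) :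
    epred (Function.update e i x) v = if v = i + 1 then x else epred e v := by
  cases v with
  | zero => simp [epred]
  | succ w =>
    rw [epred_succ, epred_succ, Function.update_apply]
    simp only [Nat.succ_eq_add_one, Nat.add_right_cancel_iff]

/-- B2: the colon-by-an-edge lemma. -/
theorem bad_colon {m t : ℕ} (ht : 1 ≤ t) (a : V) :
    Bad (m+2) t (a + Finsupp.single m 1 + Finsupp.single (m+1) 1) ↔ Bad (m+2) (t-1) a := by
  have hc : ∀ v : ℕ, (a + Finsupp.single m 1 + Finsupp.single (m+1) 1 : V) v
      = a v + (if v = m then 1 else 0) + (if v = m + 1 then 1 else 0) := by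
    intro v
    simp only [Finsupp.add_apply, Finsupp.single_apply]
    split_ifs <;> omega
  constructor
  · rintro ⟨e, hsupp, hfeas, hsum⟩
    have hem1 : e (m+1) = 0 := hsupp _ (by omega)
    by_cases hcase : 1 ≤ e m
    · refine ⟨Function.update e m (e m - 1), update_supp hsupp (by omega), ?_, ?_⟩
      · intro v
        have H := hfeas v
        rw [hc v] at H
        rw [epred_update, Function.update_apply]
        rcases eq_or_ne v (m+1) with rfl | hv1
        · have hmm : epred e (m+1) = e m := rfl
          rw [if_pos rfl, if_neg (show ¬ (m+1) = m by omega)]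
          rw [if_neg (show ¬ (m+1) = m by omega), if_pos rfl, hmm] at H
          omega
        · rcases eq_or_ne v m with rfl | hv0
          · rw [if_neg hv1, if_pos rfl]
            rw [if_pos rfl, if_neg hv1] at H
            omega
          · rw [if_neg hv1, if_neg hv0]
            rw [if_neg hv0, if_neg hv1] at H
            omega
      · rw [sum_update_sub_one (Finset.mem_range.2 (by omega)) hcase]
        omega
    · have hem : e m = 0 := by omega
      rcases Nat.eq_zero_or_pos m with rfl | hm
      · exfalso
        have : ∀ i ∈ Finset.range 2, e i = 0 := by
          intro i hi
          simp only [Finset.mem_range] at hi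
          interval_cases i
          · exact hem
          · exact hem1
        rw [Finset.sum_congr rfl this] at hsum
        simp at hsum
        omega
      · obtain ⟨w, rfl⟩ : ∃ w, m = w + 1 := ⟨m - 1, by omega⟩
        have hepm : epred e (w+1) = e w := rfl
        have hfm := hfeas (w+1)
        rw [hc (w+1), if_pos rfl, if_neg (show ¬ w+1 = w+1+1 by omega), hepm, hem] at hfm
        by_cases hcase2 : e w ≤ a (w+1)
        · have hfa : Feas e a := by
            intro v
            have H := hfeas v
            rw [hc v] at H
            rcases eq_or_ne v (w+1) with rfl | hv1
            · rw [hepm, hem]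
              omega
            · rcases eq_or_ne v (w+2) with rfl | hv2
              · have h1 : epred e (w+2) = e (w+1) := rfl
                rw [h1, hem, hem1]
                exact Nat.zero_le _
              · rw [if_neg hv1, if_neg (show ¬ v = w+1+1 from hv2)] at H
                omega
          have hne : ∑ i ∈ Finset.range (w+1+2), e i ≠ 0 := by omega
          obtain ⟨i, hi, hei⟩ := Finset.exists_ne_zero_of_sum_ne_zero hne
          refine ⟨Function.update e i (e i - 1), update_supp hsupp (by omega), ?_, ?_⟩
          · refine Feas.mono ?_ hfa
            intro k
            rw [Function.update_apply]
            split_ifs with hk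
            · subst hk; omega
            · exact le_rfl
          · rw [sum_update_sub_one hi (by omega)]
            omega
        · have hew : 1 ≤ e w := by omega
          refine ⟨Function.update e w (e w - 1), update_supp hsupp (by omega), ?_, ?_⟩
          · intro v
            have H := hfeas v
            rw [hc v] at H
            rw [epred_update, Function.update_apply]
            rcases eq_or_ne v (w+1) with rfl | hv1
            · rw [if_pos rfl, if_neg (show ¬ w+1 = w by omega), hem]
              omega
            · rcases eq_or_ne w v with rfl | hv0
              · rw [if_neg (show ¬ w = w+1 by omega), if_pos rfl]
                rw [if_neg (show ¬ w = w+1 by omega), if_neg (show ¬ w = w+1+1 by omega)] at H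
                omega
              · rcases eq_or_ne v (w+2) with rfl | hv2
                · have h1 : epred e (w+2) = e (w+1) := rfl
                  rw [if_neg (show ¬ w+2 = w+1 by omega), if_neg (show ¬ w+2 = w by omega),
                    h1, hem, hem1]
                  exact Nat.zero_le _
                · rw [if_neg hv1, if_neg (Ne.symm hv0)]
                  rw [if_neg hv1, if_neg (show ¬ v = w+1+1 from hv2)] at H
                  omega
          · rw [sum_update_sub_one (Finset.mem_range.2 (by omega)) hew]
            omega
  · rintro ⟨e, hsupp, hfeas, hsum⟩
    refine ⟨Function.update e m (e m + 1), ?_, ?_, ?_⟩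
    · intro k hk
      rcases eq_or_ne k m with rfl | hne
      · omega
      · rw [Function.update_of_ne hne]
        exact hsupp k hk
    · intro v
      have H := hfeas v
      rw [hc v, epred_update, Function.update_apply]
      rcases eq_or_ne m v with rfl | hv0
      · rw [if_neg (show ¬ m = m+1 by omega), if_pos rfl, if_pos rfl,
          if_neg (show ¬ m = m+1 by omega)]
        omega
      · rcases eq_or_ne v (m+1) with rfl | hv1
        · have h1 : epred e (m+1) = e m := rfl
          rw [if_pos rfl, if_neg (show ¬ m+1 = m by omega),
            if_neg (show ¬ m+1 = m by omega), if_pos rfl]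
          rw [h1] at H
          omega
        · rw [if_neg hv1, if_neg (Ne.symm hv0), if_neg (Ne.symm hv0), if_neg hv1]
          omega
    · have h2 : m ∈ Finset.range (m+2) := Finset.mem_range.2 (by omega)
      rw [Finset.sum_update_of_mem h2]
      rw [Finset.sum_eq_sum_sdiff_singleton_add h2] at hsum
      omega


-- appended to all.lean
def d1 (n t : ℕ) : ℕ := if n = 0 then 0 else max ((n + 3 - t) / 3) 1
def d2 (n t : ℕ) : ℕ := max ((n + 4 - t) / 3) 1

theorem F1_apply_ne_zero {n t : ℕ} {a : V} (h : F1 n t a) {j : ℕ} (hj : n ≤ j) : a j = 0 := by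
  by_contra hne
  have := h.1 (Finsupp.mem_support_iff.2 hne)
  simp only [Finset.mem_range] at this
  omega

theorem mem_supp_add_single {c : V} {k x : ℕ} :
    x ∈ (c + Finsupp.single k 1).support ↔ x ∈ c.support ∨ x = k := by
  simp only [Finsupp.mem_support_iff, Finsupp.add_apply, Finsupp.single_apply]
  rcases eq_or_ne k x with rfl | h
  · simp
  · rw [if_neg h]
    simp [Ne.symm h]

theorem supp_add_single_iff {c : V} {k n : ℕ} (hk : k < n) :
    (c + Finsupp.single k 1).support ⊆ Finset.range n ↔ c.support ⊆ Finset.range n := by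
  constructor
  · intro h x hx
    exact h (mem_supp_add_single.2 (Or.inl hx))
  · intro h x hx
    rcases mem_supp_add_single.1 hx with hx | rfl
    · exact h hx
    · exact Finset.mem_range.2 hk

theorem erase_supp_iff {a : V} {m : ℕ} :
    ((a.erase (m+1)).support ⊆ Finset.range m) ↔
      (a.support ⊆ Finset.range (m+2) ∧ a m = 0) := by
  rw [Finsupp.support_erase]
  constructor
  · intro h
    constructor
    · intro x hx
      rcases eq_or_ne x (m+1) with rfl | hne
      · exact Finset.mem_range.2 (by omega)
      · have := h (Finset.mem_erase.2 ⟨hne, hx⟩)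
        simp only [Finset.mem_range] at this ⊢
        omega
    · by_contra hne
      have : m ∈ a.support.erase (m+1) :=
        Finset.mem_erase.2 ⟨by omega, Finsupp.mem_support_iff.2 hne⟩
      have := h this
      simp at this
  · rintro ⟨h1, h2⟩ x hx
    rcases Finset.mem_erase.1 hx with ⟨hne, hxs⟩
    have hxm : x ≠ m := fun hxe => (Finsupp.mem_support_iff.1 hxs) (by rw [hxe]; exact h2)
    have := h1 hxs
    simp only [Finset.mem_range] at this ⊢
    omega

theorem erase_agree_below {a : V} {m : ℕ} : ∀ v, v < m → a v = (a.erase (m+1)) v := by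
  intro v hv
  rw [Finsupp.erase_ne (by omega)]

/-- branch equivalence: `a_m = 0` branch of `F1 (m+2) t`. -/
theorem eqv1 (m t : ℕ) (a : V) :
    (F1 (m+2) t a ∧ a m = 0) ↔ F1 m t (a.erase (m+1)) := by
  unfold F1
  constructor
  · rintro ⟨⟨hs, hb⟩, h0⟩
    refine ⟨erase_supp_iff.2 ⟨hs, h0⟩, ?_⟩
    rw [← bad_congr (erase_agree_below), ← bad_two_step h0]
    exact hb
  · rintro ⟨hs, hb⟩
    obtain ⟨hs', h0⟩ := erase_supp_iff.1 hs
    refine ⟨⟨hs', ?_⟩, h0⟩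
    rw [bad_two_step h0, bad_congr (erase_agree_below)]
    exact hb

/-- branch equivalence: the doubly shifted branch is `F1 _ (t-1)`. -/
theorem eqv2 {t : ℕ} (ht : 1 ≤ t) (m : ℕ) (c : V) :
    F1 (m+2) t (c + Finsupp.single (m+1) 1 + Finsupp.single m 1) ↔ F1 (m+2) (t-1) c := by
  unfold F1
  have hre : c + Finsupp.single (m+1) 1 + Finsupp.single m 1
      = c + Finsupp.single m 1 + Finsupp.single (m+1) 1 := add_right_comm _ _ _
  rw [hre, bad_colon ht]
  rw [supp_add_single_iff (by omega), supp_add_single_iff (by omega)]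

/-- branch equivalence: shifted-then-zero branch of `F1 (m+2) t` is `F2 (m+1) t`. -/
theorem eqv3 (m t : ℕ) (b : V) :
    (F1 (m+2) t (b + Finsupp.single m 1) ∧ b (m+1) = 0) ↔ F2 (m+1) t b := by
  unfold F1 F2
  have hb1 : (b + Finsupp.single m 1 : V) (m+1) = b (m+1) := by
    rw [Finsupp.add_apply, Finsupp.single_apply, if_neg (by omega)]
    omega
  constructor
  · rintro ⟨⟨hs, hb⟩, h0⟩
    have h0' : (b + Finsupp.single m 1 : V) (m+1) = 0 := by rw [hb1]; exact h0
    constructor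
    · intro x hx
      have hx2 := (supp_add_single_iff (show m < m + 2 by omega)).1 hs hx
      have hxm : x ≠ m + 1 := fun h => (Finsupp.mem_support_iff.1 hx) (h ▸ h0)
      simp only [Finset.mem_range] at hx2 ⊢
      omega
    · simp only [Nat.add_sub_cancel]
      rw [← bad_one_step h0']
      exact hb
  · rintro ⟨hs, hb⟩
    have h0 : b (m+1) = 0 := by
      by_contra hne
      have := hs (Finsupp.mem_support_iff.2 hne)
      simp at this
    have h0' : (b + Finsupp.single m 1 : V) (m+1) = 0 := by rw [hb1]; exact h0
    refine ⟨⟨?_, ?_⟩, h0⟩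
    · rw [supp_add_single_iff (show m < m + 2 by omega)]
      intro x hx
      have := hs hx
      simp only [Finset.mem_range] at this ⊢
      omega
    · rw [bad_one_step h0']
      simpa using hb

/-- branch equivalence: `a_m = 0` branch of `F2 (m+2) t`. -/
theorem eqv4 (m t : ℕ) (a : V) :
    (F2 (m+2) t a ∧ a m = 0) ↔ F1 m t (a.erase (m+1)) := by
  unfold F1 F2
  rw [show m + 2 - 1 = m + 1 from rfl]
  have key : ∀ h0 : a m = 0, (Bad (m+2) t (a + Finsupp.single (m+1) 1) ↔ Bad m t (a.erase (m+1))) := by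
    intro h0
    have hc : (a + Finsupp.single (m+1) 1 : V) m = 0 := by
      rw [Finsupp.add_apply, Finsupp.single_apply, if_neg (by omega)]
      exact h0
    rw [bad_two_step hc]
    refine bad_congr ?_
    intro v hv
    rw [Finsupp.add_apply, Finsupp.single_apply, if_neg (by omega), Finsupp.erase_ne (by omega)]
    omega
  constructor
  · rintro ⟨⟨hs, hb⟩, h0⟩
    refine ⟨erase_supp_iff.2 ⟨hs, h0⟩, ?_⟩
    rw [← key h0]
    exact hb
  · rintro ⟨hs, hb⟩
    obtain ⟨hs', h0⟩ := erase_supp_iff.1 hs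
    refine ⟨⟨hs', ?_⟩, h0⟩
    rw [key h0]
    exact hb

/-- branch equivalence: shifted branch of `F2 (m+2) t` is `F1 (m+2) (t-1)`. -/
theorem eqv5 {t : ℕ} (ht : 1 ≤ t) (m : ℕ) (c : V) :
    F2 (m+2) t (c + Finsupp.single m 1) ↔ F1 (m+2) (t-1) c := by
  unfold F1 F2
  rw [show m + 2 - 1 = m + 1 from rfl]
  rw [bad_colon ht, supp_add_single_iff (show m < m + 2 by omega)]

theorem F1_empty {n t : ℕ} (ht : t = 0) (a : V) : ¬ F1 n t a := by
  rintro ⟨-, hb⟩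
  exact hb (ht ▸ bad_zero n a)

theorem F2_empty {n t : ℕ} (ht : t = 0) (a : V) : ¬ F2 n t a := by
  rintro ⟨-, hb⟩
  exact hb (ht ▸ bad_zero n _)

theorem F1_base0 {t : ℕ} (ht : 1 ≤ t) : PartitionsInto (F1 0 t) 0 := by
  refine ⟨{(0, ∅)}, by simp, ?_, ?_⟩
  · intro p hp v hv
    simp only [Finset.mem_singleton] at hp
    subst hp
    simp only [Finset.subset_empty] at hv
    have hv0 : v = 0 := by
      rwa [← Finsupp.support_eq_empty]
    subst hv0
    exact ⟨by simp, not_bad_of_no_edge (by omega) ht _⟩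
  · intro a ha
    have ha0 : a = 0 := by
      rw [← Finsupp.support_eq_empty, ← Finset.subset_empty]
      simpa using ha.1
    subst ha0
    refine ⟨(0, ∅), ⟨by simp, 0, by simp⟩, ?_⟩
    rintro q ⟨hq, -⟩
    simpa using hq

theorem F1_base1 {t : ℕ} (ht : 1 ≤ t) : PartitionsInto (F1 1 t) 1 := by
  refine ⟨{(0, {0})}, by simp, ?_, ?_⟩
  · intro p hp v hv
    simp only [Finset.mem_singleton] at hp
    subst hp
    refine ⟨?_, not_bad_of_no_edge (by omega) ht _⟩
    simp only [zero_add]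
    intro x hx
    have := hv hx
    simpa using this
  · intro a ha
    refine ⟨(0, {0}), ⟨by simp, a, ?_, by simp⟩, ?_⟩
    · simpa using ha.1
    · rintro q ⟨hq, -⟩
      simpa using hq

theorem F2_base1 {t : ℕ} (ht : 1 ≤ t) : PartitionsInto (F2 1 t) 1 := by
  refine ⟨{(0, {0})}, by simp, ?_, ?_⟩
  · intro p hp v hv
    simp only [Finset.mem_singleton] at hp
    subst hp
    refine ⟨?_, not_bad_of_no_edge (by omega) ht _⟩
    simp only [zero_add]
    intro x hx
    have := hv hx
    simpa using this
  · intro a ha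
    refine ⟨(0, {0}), ⟨by simp, a, ?_, by simp⟩, ?_⟩
    · simpa using ha.1
    · rintro q ⟨hq, -⟩
      simpa using hq

theorem main_induction :
    ∀ N t n, 3*t + n ≤ N →
      PartitionsInto (F1 n t) (d1 n t) ∧ (1 ≤ n → PartitionsInto (F2 n t) (d2 n t)) := by
  intro N
  induction N with
  | zero =>
    intro t n h
    have ht : t = 0 := by omega
    exact ⟨PartitionsInto.of_empty (F1_empty ht) _,
      fun _ => PartitionsInto.of_empty (F2_empty ht) _⟩
  | succ N ih =>
    intro t n h
    rcases Nat.eq_zero_or_pos t with rfl | ht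
    · exact ⟨PartitionsInto.of_empty (F1_empty rfl) _,
        fun _ => PartitionsInto.of_empty (F2_empty rfl) _⟩
    match n with
    | 0 =>
      refine ⟨?_, fun hh => absurd hh (by omega)⟩
      have : d1 0 t = 0 := by simp [d1]
      rw [this]
      exact F1_base0 ht
    | 1 =>
      constructor
      · refine (F1_base1 ht).mono ?_
        simp only [d1, if_neg one_ne_zero]
        omega
      · intro _
        refine (F2_base1 ht).mono ?_
        simp only [d2]
        omega
    | (m+2) =>
      -- ingredients from the induction hypothesis
      have ihF1m : PartitionsInto (F1 m t) (d1 m t) := (ih t m (by omega)).1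
      have ihF1t : PartitionsInto (F1 (m+2) (t-1)) (d1 (m+2) (t-1)) :=
        (ih (t-1) (m+2) (by omega)).1
      have ihF2 : PartitionsInto (F2 (m+1) t) (d2 (m+1) t) :=
        (ih t (m+1) (by omega)).2 (by omega)
      have hfree : PartitionsInto (fun a => F1 m t (a.erase (m+1))) (d1 m t + 1) :=
        ihF1m.free (fun a ha => F1_apply_ne_zero ha (by omega))
      constructor
      · -- F1 (m+2) t
        refine PartitionsInto.split (j := m) ?_ ?_
        · refine (hfree.mono ?_).congr (fun a => (eqv1 m t a).symm)
          simp only [d1]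
          split_ifs <;> omega
        · refine PartitionsInto.split (j := m+1) ?_ ?_
          · refine (ihF2.mono ?_).congr (fun b => (eqv3 m t b).symm)
            simp only [d1, d2, if_neg (by omega : ¬ m + 2 = 0)]
            omega
          · refine (ihF1t.mono ?_).congr (fun c => (eqv2 ht m c).symm)
            simp only [d1, if_neg (by omega : ¬ m + 2 = 0)]
            omega
      · intro _
        refine PartitionsInto.split (j := m) ?_ ?_
        · refine (hfree.mono ?_).congr (fun a => (eqv4 m t a).symm)
          simp only [d1, d2]
          split_ifs <;> omega
        · refine (ihF1t.mono ?_).congr (fun c => (eqv5 ht m c).symm)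
          simp only [d1, d2, if_neg (by omega : ¬ m + 2 = 0)]
          omega


end SdepthAux
-- bridge
section Bridge
open MvPolynomial

def EdgeSet (n : ℕ) : Set (Fin n →₀ ℕ) :=
  {b | ∃ i j : Fin n, (j : ℕ) = (i : ℕ) + 1 ∧ (i : ℕ) + 2 ≤ n ∧
    b = Finsupp.single i 1 + Finsupp.single j 1}

def BSet (n : ℕ) : ℕ → Set (Fin n →₀ ℕ)
  | 0 => {0}
  | t+1 => {c | ∃ b ∈ BSet n t, ∃ g ∈ EdgeSet n, c = b + g}

theorem pathIdeal_eq (K : Type*) [Field K] (n : ℕ) :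
    pathIdeal K n n = Ideal.span ((fun s => monomial s (1:K)) '' EdgeSet n) := by
  unfold pathIdeal
  congr 1
  ext p
  constructor
  · rintro ⟨i, j, hj, hi, rfl⟩
    refine ⟨Finsupp.single i 1 + Finsupp.single j 1, ⟨i, j, hj, hi, rfl⟩, ?_⟩
    rw [X, X, monomial_mul, one_mul]
  · rintro ⟨b, ⟨i, j, hj, hi, rfl⟩, rfl⟩
    refine ⟨i, j, hj, hi, ?_⟩
    rw [X, X, monomial_mul, one_mul]

theorem pathIdeal_pow_eq (K : Type*) [Field K] (n t : ℕ) :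
    (pathIdeal K n n) ^ t = Ideal.span ((fun s => monomial s (1:K)) '' BSet n t) := by
  induction t with
  | zero =>
    rw [pow_zero, Ideal.one_eq_top]
    have : BSet n 0 = {0} := rfl
    rw [this, Set.image_singleton]
    rw [show (monomial (0 : Fin n →₀ ℕ) (1:K)) = 1 from by
      rw [monomial_zero', C_1]]
    rw [Ideal.span_singleton_one]
  | succ t ihp =>
    rw [pow_succ, ihp, pathIdeal_eq, Ideal.span_mul_span']
    congr 1
    ext c
    rw [Set.mem_mul]
    constructor
    · rintro ⟨x, hx, y, hy, rfl⟩
      obtain ⟨b, hb, rfl⟩ := hx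
      obtain ⟨g, hg, rfl⟩ := hy
      refine ⟨b + g, ⟨b, hb, g, hg, rfl⟩, ?_⟩
      simp only
      rw [monomial_mul, one_mul]
    · rintro ⟨x, ⟨b, hb, g, hg, rfl⟩, rfl⟩
      refine ⟨monomial b 1, ⟨b, hb, rfl⟩, monomial g 1, ⟨g, hg, rfl⟩, ?_⟩
      rw [monomial_mul, one_mul]

theorem monomial_mem_pow_iff {K : Type*} [Field K] {n : ℕ} (a : Fin n →₀ ℕ) (t : ℕ) :
    (monomial a (1:K) ∈ (pathIdeal K n n) ^ t) ↔ ∃ b ∈ BSet n t, b ≤ a := by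
  rw [pathIdeal_pow_eq, mem_ideal_span_monomial_image]
  classical
  rw [support_monomial, if_neg (one_ne_zero)]
  simp

namespace SdepthAux

noncomputable def lift {n : ℕ} (a : Fin n →₀ ℕ) : V :=
  Finsupp.embDomain ⟨Fin.val, Fin.val_injective⟩ a

theorem lift_apply_coe {n : ℕ} (a : Fin n →₀ ℕ) (i : Fin n) : lift a (i : ℕ) = a i :=
  Finsupp.embDomain_apply_self _ _ _

theorem lift_apply_lt {n : ℕ} (a : Fin n →₀ ℕ) {v : ℕ} (hv : v < n) :
    lift a v = a ⟨v, hv⟩ :=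
  lift_apply_coe a ⟨v, hv⟩

theorem lift_apply_ge {n : ℕ} (a : Fin n →₀ ℕ) {v : ℕ} (hv : n ≤ v) : lift a v = 0 := by
  refine Finsupp.embDomain_notin_range _ _ _ ?_
  rintro ⟨i, hi⟩
  have h2 : (i : ℕ) = v := hi
  have := i.isLt
  omega

theorem lift_support {n : ℕ} (a : Fin n →₀ ℕ) : (lift a).support ⊆ Finset.range n := by
  intro x hx
  by_contra hc
  simp only [Finset.mem_range, not_lt] at hc
  rw [Finsupp.mem_support_iff, lift_apply_ge a hc] at hx
  exact hx rfl

theorem lift_add {n : ℕ} (a b : Fin n →₀ ℕ) : lift (a + b) = lift a + lift b :=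
  Finsupp.embDomain_add _ _ _

theorem lift_zero {n : ℕ} : lift (0 : Fin n →₀ ℕ) = 0 :=
  Finsupp.embDomain_zero _

theorem lift_single {n : ℕ} (i : Fin n) : lift (Finsupp.single i 1) = Finsupp.single (i:ℕ) 1 :=
  Finsupp.embDomain_single _ _ _

theorem BSet_profile {n t : ℕ} {b : Fin n →₀ ℕ} (hb : b ∈ BSet n t) :
    ∃ e : ℕ → ℕ, (∀ i, ¬ (i + 2 ≤ n) → e i = 0) ∧ (∑ i ∈ Finset.range n, e i) = t ∧
      ∀ v : ℕ, lift b v = epred e v + e v := by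
  induction t generalizing b with
  | zero =>
    obtain rfl : b = 0 := hb
    refine ⟨fun _ => 0, fun _ _ => rfl, by simp, fun v => by
      cases v <;> simp [lift_zero, epred]⟩
  | succ t ihp =>
    obtain ⟨b', hb', g, ⟨i, j, hj, hi, rfl⟩, rfl⟩ := hb
    obtain ⟨e, he1, he2, he3⟩ := ihp hb'
    have hii : (i:ℕ) ∈ Finset.range n := Finset.mem_range.2 (by omega)
    refine ⟨fun k => if k = (i:ℕ) then e k + 1 else e k, ?_, ?_, ?_⟩
    · intro k hk
      show (if k = (i:ℕ) then e k + 1 else e k) = 0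
      rw [if_neg (by omega : ¬ k = (i:ℕ))]
      exact he1 k hk
    · have hcg : ∀ k ∈ Finset.range n,
          (if k = (i:ℕ) then e k + 1 else e k) = e k + (if k = (i:ℕ) then 1 else 0) := by
        intro k _
        split_ifs <;> first | omega | contradiction
      rw [Finset.sum_congr rfl hcg, Finset.sum_add_distrib, he2]
      rw [Finset.sum_ite_eq' (Finset.range n) (i:ℕ) (fun _ => 1), if_pos hii]
    · intro v
      have h3 := he3 v
      have hlift : lift (b' + (Finsupp.single i 1 + Finsupp.single j 1)) v
          = lift b' v + ((if (i:ℕ) = v then 1 else 0) + (if (j:ℕ) = v then 1 else 0)) := by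
        rw [lift_add, lift_add, lift_single, lift_single]
        simp [Finsupp.single_apply]
      rw [hlift, h3]
      cases v with
      | zero =>
        show (epred e 0 + e 0) + _ = epred _ 0 + (if 0 = (i:ℕ) then e 0 + 1 else e 0)
        have h0 : epred (fun k => if k = (i:ℕ) then e k + 1 else e k) 0 = 0 := rfl
        have h0' : epred e 0 = 0 := rfl
        rw [h0, h0']
        split_ifs <;> first | omega | contradiction
      | succ w =>
        show (epred e (w+1) + e (w+1)) + _
            = (if w = (i:ℕ) then e w + 1 else e w) + (if w+1 = (i:ℕ) then e (w+1) + 1 else e (w+1))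
        have h0' : epred e (w+1) = e w := rfl
        rw [h0']
        split_ifs <;> first | omega | contradiction

theorem profile_BSet {n : ℕ} : ∀ {t : ℕ} {e : ℕ → ℕ}, (∀ i, ¬ (i + 2 ≤ n) → e i = 0) →
    (∑ i ∈ Finset.range n, e i) = t →
    ∃ b ∈ BSet n t, ∀ v : ℕ, lift b v = epred e v + e v := by
  intro t
  induction t with
  | zero =>
    intro e h1 h2
    have he : ∀ k, e k = 0 := by
      intro k
      by_cases hk : k < n
      · exact (Finset.sum_eq_zero_iff.1 h2) k (Finset.mem_range.2 hk)
      · exact h1 k (by omega)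
    refine ⟨0, rfl, fun v => by cases v <;> simp [lift_zero, epred, he]⟩
  | succ t ihp =>
    intro e h1 h2
    obtain ⟨i, hi, hei⟩ := Finset.exists_ne_zero_of_sum_ne_zero
      (show ∑ k ∈ Finset.range n, e k ≠ 0 by omega)
    have hin : i + 2 ≤ n := by
      by_contra hc
      exact hei (h1 i hc)
    have h1' := update_supp (i := i) (x := e i - 1) h1 (by omega)
    have h2' : ∑ k ∈ Finset.range n, Function.update e i (e i - 1) k = t := by
      rw [sum_update_sub_one hi (by omega)]
      omega
    obtain ⟨b', hb', hb3⟩ := ihp h1' h2'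
    refine ⟨b' + (Finsupp.single ⟨i, by omega⟩ 1 + Finsupp.single ⟨i+1, by omega⟩ 1),
      ⟨b', hb', _, ⟨⟨i, by omega⟩, ⟨i+1, by omega⟩, rfl, hin, rfl⟩, rfl⟩, ?_⟩
    intro v
    have h3 := hb3 v
    have hlift : lift (b' + (Finsupp.single (⟨i, by omega⟩ : Fin n) 1
        + Finsupp.single (⟨i+1, by omega⟩ : Fin n) 1)) v
        = lift b' v + ((if i = v then 1 else 0) + (if i + 1 = v then 1 else 0)) := by
      rw [lift_add, lift_add, lift_single, lift_single]
      simp [Finsupp.single_apply]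
    rw [hlift, h3]
    have hupd : ∀ k, Function.update e i (e i - 1) k = if k = i then e i - 1 else e k :=
      fun k => Function.update_apply e i (e i - 1) k
    cases v with
    | zero =>
      have h0 : epred (Function.update e i (e i - 1)) 0 = 0 := rfl
      have h0' : epred e 0 = 0 := rfl
      rw [h0, h0', hupd 0]
      rcases eq_or_ne (0:ℕ) i with rfl | hne
      · split_ifs <;> first | omega | contradiction
      · split_ifs <;> first | omega | contradiction
    | succ w =>
      have h0 : epred (Function.update e i (e i - 1)) (w+1) = Function.update e i (e i - 1) w := rfl
      have h0' : epred e (w+1) = e w := rfl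
      rw [h0, h0', hupd w, hupd (w+1)]
      rcases eq_or_ne w i with rfl | hne1
      · split_ifs <;> first | omega | contradiction
      · rcases eq_or_ne (w+1) i with rfl | hne2
        · split_ifs <;> first | omega | contradiction
        · split_ifs <;> first | omega | contradiction

theorem bad_iff {K : Type*} [Field K] {n : ℕ} (a : Fin n →₀ ℕ) (t : ℕ) :
    Bad n t (lift a) ↔ ∃ b ∈ BSet n t, b ≤ a := by
  constructor
  · rintro ⟨e, h1, hf, h2⟩
    obtain ⟨b, hb, hb3⟩ := profile_BSet h1 h2
    refine ⟨b, hb, ?_⟩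
    rw [Finsupp.le_def]
    intro i
    calc b i = lift b (i:ℕ) := (lift_apply_coe b i).symm
    _ = epred e (i:ℕ) + e (i:ℕ) := hb3 (i:ℕ)
    _ ≤ lift a (i:ℕ) := hf (i:ℕ)
    _ = a i := lift_apply_coe a i
  · rintro ⟨b, hb, hba⟩
    obtain ⟨e, h1, h2, h3⟩ := BSet_profile hb
    refine ⟨e, h1, ?_, h2⟩
    intro v
    rw [← h3 v]
    by_cases hv : v < n
    · rw [lift_apply_lt b hv, lift_apply_lt a hv]
      exact Finsupp.le_def.1 hba _
    · rw [lift_apply_ge b (by omega)]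
      exact Nat.zero_le _

theorem not_mem_iff_F1 {K : Type*} [Field K] {n : ℕ} (a : Fin n →₀ ℕ) (t : ℕ) :
    (monomial a (1:K) ∉ (pathIdeal K n n) ^ t) ↔ F1 n t (lift a) := by
  rw [monomial_mem_pow_iff, F1]
  rw [bad_iff (K := K)]
  simp [lift_support]

end SdepthAux
end Bridge

-- final assembly
section Final
open MvPolynomial SdepthAux

noncomputable def restrict {n : ℕ} (u : V) : Fin n →₀ ℕ :=
  Finsupp.comapDomain Fin.val u (Fin.val_injective.injOn)

theorem restrict_apply {n : ℕ} (u : V) (i : Fin n) : restrict u i = u (i : ℕ) :=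
  Finsupp.comapDomain_apply _ _ _ _

theorem lift_restrict {n : ℕ} (u : V) (h : u.support ⊆ Finset.range n) :
    lift (restrict (n := n) u) = u := by
  ext v
  by_cases hv : v < n
  · rw [lift_apply_lt _ hv, restrict_apply]
  · rw [lift_apply_ge _ (by omega)]
    by_contra hne
    have := h (Finsupp.mem_support_iff.2 fun h0 => hne h0.symm)
    simp only [Finset.mem_range] at this
    omega

theorem restrict_lift {n : ℕ} (a : Fin n →₀ ℕ) : restrict (lift a) = a := by
  ext i
  rw [restrict_apply, lift_apply_coe]

def filterFin (n : ℕ) (Z : Finset ℕ) : Finset (Fin n) :=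
  Finset.univ.filter (fun i => (i : ℕ) ∈ Z)

theorem mem_filterFin {n : ℕ} {Z : Finset ℕ} {i : Fin n} :
    i ∈ filterFin n Z ↔ (i : ℕ) ∈ Z := by
  simp [filterFin]

theorem card_filterFin {n : ℕ} {Z : Finset ℕ} (h : Z ⊆ Finset.range n) :
    (filterFin n Z).card = Z.card := by
  have himg : (filterFin n Z).image Fin.val = Z := by
    ext v
    simp only [Finset.mem_image]
    constructor
    · rintro ⟨i, hi, rfl⟩
      exact mem_filterFin.1 hi
    · intro hv
      have hvn : v < n := Finset.mem_range.1 (h hv)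
      exact ⟨⟨v, hvn⟩, mem_filterFin.2 hv, rfl⟩
  calc (filterFin n Z).card = ((filterFin n Z).image Fin.val).card :=
        (Finset.card_image_of_injective _ Fin.val_injective).symm
  _ = Z.card := by rw [himg]

theorem lift_support_subset {n : ℕ} {v : Fin n →₀ ℕ} {Z : Finset ℕ}
    (h : v.support ⊆ filterFin n Z) : (lift v).support ⊆ Z := by
  intro x hx
  rw [lift] at hx
  rw [Finsupp.support_embDomain, Finset.mem_map] at hx
  obtain ⟨i, hi, rfl⟩ := hx
  exact mem_filterFin.1 (h hi)

theorem exists_decomp (K : Type*) [Field K] (n t : ℕ) (ht : 1 ≤ t) :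
    ∃ D : Finset ((Fin n →₀ ℕ) × Finset (Fin n)),
      IsStanleyDecomp ((pathIdeal K n n) ^ t) D ∧ ∀ p ∈ D, d1 n t ≤ p.2.card := by
  obtain ⟨D, hcard, hint, hcover⟩ := (main_induction (3*t+n) t n le_rfl).1
  have hZ : ∀ p ∈ D, p.2 ⊆ Finset.range n := by
    intro p hp z hz
    have h1 := hint p hp (Finsupp.single z 1) (by
      rw [Finsupp.support_single_ne_zero _ one_ne_zero]
      simpa using hz)
    have h2 : z ∈ (p.1 + Finsupp.single z 1).support := by
      rw [Finsupp.mem_support_iff, Finsupp.add_apply, Finsupp.single_apply, if_pos rfl]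
      omega
    exact h1.1 h2
  have hu : ∀ p ∈ D, p.1.support ⊆ Finset.range n := by
    intro p hp
    have := hint p hp 0 (by simp)
    simpa using this.1
  have hulift : ∀ p ∈ D, lift (restrict (n := n) p.1) = p.1 := fun p hp =>
    lift_restrict p.1 (hu p hp)
  refine ⟨D.image (fun p => (restrict p.1, filterFin n p.2)), ⟨?_, ?_⟩, ?_⟩
  · -- Stanley spaces avoid the ideal
    intro p' hp' v hv
    simp only [Finset.mem_image] at hp'
    obtain ⟨q, hq, rfl⟩ := hp'
    rw [not_mem_iff_F1]
    have : lift (restrict (n := n) q.1 + v) = q.1 + lift v := by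
      rw [lift_add, hulift q hq]
    rw [this]
    exact hint q hq (lift v) (lift_support_subset hv)
  · -- coverage and uniqueness
    intro a ha
    rw [not_mem_iff_F1] at ha
    obtain ⟨q, ⟨hqD, w, hw, haw⟩, hquniq⟩ := hcover (lift a) ha
    refine ⟨(restrict q.1, filterFin n q.2),
      ⟨Finset.mem_image_of_mem _ hqD, restrict w, ?_, ?_⟩, ?_⟩
    · intro i hi
      rw [Finsupp.mem_support_iff, restrict_apply] at hi
      exact mem_filterFin.2 (hw (Finsupp.mem_support_iff.2 hi))
    · ext i
      rw [Finsupp.add_apply, restrict_apply, restrict_apply, ← Finsupp.add_apply, ← haw,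
        lift_apply_coe]
    · rintro r' ⟨hr'D, v, hv, hav⟩
      simp only [Finset.mem_image] at hr'D
      obtain ⟨r, hr, rfl⟩ := hr'D
      have : r = q := by
        refine hquniq r ⟨hr, lift v, lift_support_subset hv, ?_⟩
        rw [hav, lift_add, hulift r hr]
      rw [this]
  · intro p' hp'
    simp only [Finset.mem_image] at hp'
    obtain ⟨q, hq, rfl⟩ := hp'
    rw [card_filterFin (hZ q hq)]
    exact hcard q hq

theorem one_not_mem (K : Type*) [Field K] (n t : ℕ) (ht : 1 ≤ t) :
    monomial (0 : Fin n →₀ ℕ) (1:K) ∉ (pathIdeal K n n) ^ t := by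
  rw [monomial_mem_pow_iff]
  rintro ⟨b, hb, hble⟩
  have hb0 : b = 0 := le_antisymm hble zero_le
  subst hb0
  obtain ⟨e, h1, h2, h3⟩ := BSet_profile hb
  have hz : ∀ i ∈ Finset.range n, e i = 0 := by
    intro i _
    have := h3 i
    rw [lift_zero] at this
    simp only [Finsupp.coe_zero, Pi.zero_apply] at this
    omega
  rw [Finset.sum_congr rfl hz] at h2
  simp at h2
  omega

theorem sdepth_ge_d1 (K : Type*) [Field K] (n t : ℕ) (ht : 1 ≤ t) :
    d1 n t ≤ sdepth ((pathIdeal K n n) ^ t) := by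
  obtain ⟨D, hD, hcard⟩ := exists_decomp K n t ht
  refine le_csSup ⟨n, ?_⟩ ⟨D, hD, hcard⟩
  rintro s ⟨D', hD', hs⟩
  obtain ⟨p, ⟨hpD, -⟩, -⟩ := hD'.2 0 (one_not_mem K n t ht)
  calc s ≤ p.2.card := hs p hpD
  _ ≤ n := by simpa using Finset.card_le_univ p.2

end Final

/-- For `n ≥ 2`, `t ≥ 1` and `I = I(P_n)` the edge ideal of the path `P_n` in
`S = K[x_1, …, x_n]`, one has `sdepth (S/Iᵗ) ≥ max {⌈(n - t + 1)/3⌉, 1}`. -/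
theorem sdepth_pathIdeal_pow_ge {K : Type*} [Field K] (n t : ℕ) (hn : 2 ≤ n) (ht : 1 ≤ t) :
    max ⌈((n : ℚ) - t + 1) / 3⌉ 1 ≤ (sdepth ((pathIdeal K n n) ^ t) : ℤ) := by
  have h1 := sdepth_ge_d1 K n t ht
  have h2 : (SdepthAux.d1 n t : ℤ) ≤ (sdepth ((pathIdeal K n n) ^ t) : ℤ) := by
    exact_mod_cast h1
  refine le_trans (max_le ?_ ?_) h2
  · rw [Int.ceil_le]
    have key : ((n:ℤ) - t + 1) ≤ 3 * (SdepthAux.d1 n t : ℤ) := by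
      rw [SdepthAux.d1, if_neg (by omega : ¬ n = 0)]
      omega
    rw [div_le_iff₀ (by norm_num : (0:ℚ) < 3)]
    have : ((n:ℚ) - t + 1) ≤ 3 * ((SdepthAux.d1 n t : ℤ) : ℚ) := by
      exact_mod_cast key
    linarith
  · have : 1 ≤ (SdepthAux.d1 n t : ℤ) := by
      rw [SdepthAux.d1, if_neg (by omega : ¬ n = 0)]
      omega
    exact this
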